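/- Let G be a finite group and ω a normalized 3-cocycle with values in k^×. Define A_G^ω as the k-vector space with basis {e_{a|b|y|x} : a,b,y,x ∈ G} and multiplication e_{a'|b'|y'|x'}·e_{a|b|y|x} = δ_{y',ayb} δ_{x',axb} · (ω(a',a,x)/ω(a',a,y)) · (ω(a',ax,b)/ω(a',ay,b)) · (ω(a'ay,b,b')/ω(a'ax,b,b')) · e_{a'a|bb'|y|x}, with unit Σ_{y,x} e_{1|1|y|x}. Then this multiplication is associative and unital, so A_G^ω is a k-algebra of dimension |G|⁴. -/

import Mathlib

noncomputable section

variable (k : Type*) [Field k] (G : Type*) [Group G] [Fintype G] (ω : G → G → G → kˣ)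

/-- The underlying vector space of `A_G^ω`, with basis `{e_{a|b|y|x} : a, b, y, x ∈ G}`. -/
abbrev AG (k G : Type*) [Field k] := (G × G × G × G) →₀ k

/-- The product of two basis vectors `e_{a'|b'|y'|x'} · e_{a|b|y|x}`:
`δ_{y',ayb} δ_{x',axb} (ω(a',a,x)/ω(a',a,y)) (ω(a',ax,b)/ω(a',ay,b))
(ω(a'ay,b,b')/ω(a'ax,b,b')) e_{a'a|bb'|y|x}`. -/
def agMulFun (p q : G × G × G × G) : AG k G := by
  classical
  -- p = (a', b', y', x'), q = (a, b, y, x)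
  exact if p.2.2.1 = q.1 * q.2.2.1 * q.2.1 ∧ p.2.2.2 = q.1 * q.2.2.2 * q.2.1
    then ((ω p.1 q.1 q.2.2.2 * (ω p.1 q.1 q.2.2.1)⁻¹
        * (ω p.1 (q.1 * q.2.2.2) q.2.1) * (ω p.1 (q.1 * q.2.2.1) q.2.1)⁻¹
        * (ω (p.1 * q.1 * q.2.2.1) q.2.1 p.2.1)
        * (ω (p.1 * q.1 * q.2.2.2) q.2.1 p.2.1)⁻¹ : kˣ) : k) •
      Finsupp.single (p.1 * q.1, q.2.1 * p.2.1, q.2.2.1, q.2.2.2) 1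
    else 0

/-- The multiplication of `A_G^ω`. -/
def agMul : AG k G →ₗ[k] AG k G →ₗ[k] AG k G :=
  Finsupp.lsum k fun p => LinearMap.toSpanSingleton k _
    (Finsupp.lsum k fun q => LinearMap.toSpanSingleton k _ (agMulFun k G ω p q))

/-- The unit `Σ_{y,x} e_{1|1|y|x}` of `A_G^ω`. -/
def agOne : AG k G := ∑ y : G, ∑ x : G, Finsupp.single ((1 : G), (1 : G), y, x) 1


lemma agMul_single (p q : G × G × G × G) (c d : k) :
    agMul k G ω (Finsupp.single p c) (Finsupp.single q d)
      = (c * d) • agMulFun k G ω p q := by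
  simp [agMul, Finsupp.lsum_single, LinearMap.toSpanSingleton_apply, mul_smul]

lemma key (hcocycle : ∀ g₁ g₂ g₃ g₄ : G,
      ω (g₁ * g₂) g₃ g₄ * ω g₁ g₂ (g₃ * g₄)
        = ω g₁ g₂ g₃ * ω g₁ (g₂ * g₃) g₄ * ω g₂ g₃ g₄)
    (a1 b1 a2 b2 a3 b3 y x : G) :
    (ω a1 a2 (a3 * x * b3) * (ω a1 a2 (a3 * y * b3))⁻¹
        * ω a1 (a2 * (a3 * x * b3)) b2 * (ω a1 (a2 * (a3 * y * b3)) b2)⁻¹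
        * ω (a1 * a2 * (a3 * y * b3)) b2 b1 * (ω (a1 * a2 * (a3 * x * b3)) b2 b1)⁻¹)
      * (ω (a1 * a2) a3 x * (ω (a1 * a2) a3 y)⁻¹
        * ω (a1 * a2) (a3 * x) b3 * (ω (a1 * a2) (a3 * y) b3)⁻¹
        * ω (a1 * a2 * a3 * y) b3 (b2 * b1) * (ω (a1 * a2 * a3 * x) b3 (b2 * b1))⁻¹)
    = (ω a2 a3 x * (ω a2 a3 y)⁻¹
        * ω a2 (a3 * x) b3 * (ω a2 (a3 * y) b3)⁻¹
        * ω (a2 * a3 * y) b3 b2 * (ω (a2 * a3 * x) b3 b2)⁻¹)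
      * (ω a1 (a2 * a3) x * (ω a1 (a2 * a3) y)⁻¹
        * ω a1 (a2 * a3 * x) (b3 * b2) * (ω a1 (a2 * a3 * y) (b3 * b2))⁻¹
        * ω (a1 * (a2 * a3) * y) (b3 * b2) b1 * (ω (a1 * (a2 * a3) * x) (b3 * b2) b1)⁻¹) := by
  have c1 := congrArg Units.val (hcocycle a1 a2 a3 x)
  have c2 := congrArg Units.val (hcocycle a1 a2 (a3 * x) b3)
  have c3 := congrArg Units.val (hcocycle a1 (a2 * (a3 * x)) b3 b2)
  have c4 := congrArg Units.val (hcocycle (a1 * (a2 * (a3 * x))) b3 b2 b1)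
  have d1 := congrArg Units.val (hcocycle a1 a2 a3 y)
  have d2 := congrArg Units.val (hcocycle a1 a2 (a3 * y) b3)
  have d3 := congrArg Units.val (hcocycle a1 (a2 * (a3 * y)) b3 b2)
  have d4 := congrArg Units.val (hcocycle (a1 * (a2 * (a3 * y))) b3 b2 b1)
  rw [Units.ext_iff]
  push_cast [mul_assoc] at c1 c2 c3 c4 d1 d2 d3 d4 ⊢
  field_simp
  linear_combination
    (((ω a1 (a2 * (a3 * (x * b3))) b2 : kˣ) : k) * ((ω (a1 * (a2 * (a3 * (y * b3)))) b2 b1 : kˣ) : k) * ((ω (a1 * a2) a3 x : kˣ) : k) * ((ω (a1 * (a2 * (a3 * y))) b3 (b2 * b1) : kˣ) : k) * ((ω a2 a3 y : kˣ) : k) * ((ω a2 (a3 * y) b3 : kˣ) : k) * ((ω (a2 * (a3 * x)) b3 b2 : kˣ) : k) * ((ω a1 (a2 * a3) y : kˣ) : k) * ((ω a1 (a2 * (a3 * y)) (b3 * b2) : kˣ) : k) * ((ω (a1 * (a2 * (a3 * x))) (b3 * b2) b1 : kˣ) : k)) * c2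
    + (((ω a1 (a2 * (a3 * (x * b3))) b2 : kˣ) : k) * ((ω (a1 * (a2 * (a3 * (y * b3)))) b2 b1 : kˣ) : k) * ((ω (a1 * (a2 * (a3 * y))) b3 (b2 * b1) : kˣ) : k) * ((ω a2 a3 y : kˣ) : k) * ((ω a2 (a3 * y) b3 : kˣ) : k) * ((ω (a2 * (a3 * x)) b3 b2 : kˣ) : k) * ((ω a1 (a2 * a3) y : kˣ) : k) * ((ω a1 (a2 * (a3 * y)) (b3 * b2) : kˣ) : k) * ((ω (a1 * (a2 * (a3 * x))) (b3 * b2) b1 : kˣ) : k) * ((ω a1 (a2 * (a3 * x)) b3 : kˣ) : k) * ((ω a2 (a3 * x) b3 : kˣ) : k)) * c1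
    - (((ω (a1 * (a2 * (a3 * (y * b3)))) b2 b1 : kˣ) : k) * ((ω (a1 * (a2 * (a3 * y))) b3 (b2 * b1) : kˣ) : k) * ((ω a2 a3 y : kˣ) : k) * ((ω a2 (a3 * y) b3 : kˣ) : k) * ((ω a1 (a2 * a3) y : kˣ) : k) * ((ω a1 (a2 * (a3 * y)) (b3 * b2) : kˣ) : k) * ((ω (a1 * (a2 * (a3 * x))) (b3 * b2) b1 : kˣ) : k) * ((ω a2 (a3 * x) b3 : kˣ) : k) * ((ω a1 a2 a3 : kˣ) : k) * ((ω a1 (a2 * a3) x : kˣ) : k) * ((ω a2 a3 x : kˣ) : k)) * c3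
    - (((ω (a1 * (a2 * (a3 * (y * b3)))) b2 b1 : kˣ) : k) * ((ω (a1 * (a2 * (a3 * y))) b3 (b2 * b1) : kˣ) : k) * ((ω a2 (a3 * y) b3 : kˣ) : k) * ((ω a1 (a2 * (a3 * y)) (b3 * b2) : kˣ) : k) * ((ω (a1 * (a2 * (a3 * x))) (b3 * b2) b1 : kˣ) : k) * ((ω a2 (a3 * x) b3 : kˣ) : k) * ((ω a1 (a2 * a3) x : kˣ) : k) * ((ω a2 a3 x : kˣ) : k) * ((ω (a1 * (a2 * (a3 * x))) b3 b2 : kˣ) : k) * ((ω a1 (a2 * (a3 * x)) (b3 * b2) : kˣ) : k)) * d1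
    + (((ω a2 (a3 * y) b3 : kˣ) : k) * ((ω a1 (a2 * (a3 * y)) (b3 * b2) : kˣ) : k) * ((ω (a1 * (a2 * (a3 * x))) (b3 * b2) b1 : kˣ) : k) * ((ω a2 (a3 * x) b3 : kˣ) : k) * ((ω a1 (a2 * a3) x : kˣ) : k) * ((ω a2 a3 x : kˣ) : k) * ((ω (a1 * (a2 * (a3 * x))) b3 b2 : kˣ) : k) * ((ω a1 (a2 * (a3 * x)) (b3 * b2) : kˣ) : k) * ((ω (a1 * a2) a3 y : kˣ) : k) * ((ω a1 a2 (a3 * y) : kˣ) : k)) * d4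
    - (((ω a2 (a3 * y) b3 : kˣ) : k) * ((ω a1 (a2 * (a3 * y)) (b3 * b2) : kˣ) : k) * ((ω a2 (a3 * x) b3 : kˣ) : k) * ((ω a1 (a2 * a3) x : kˣ) : k) * ((ω a2 a3 x : kˣ) : k) * ((ω a1 (a2 * (a3 * x)) (b3 * b2) : kˣ) : k) * ((ω (a1 * a2) a3 y : kˣ) : k) * ((ω a1 a2 (a3 * y) : kˣ) : k) * ((ω (a1 * (a2 * (a3 * y))) b3 b2 : kˣ) : k) * ((ω (a1 * (a2 * (a3 * y))) (b3 * b2) b1 : kˣ) : k)) * c4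
    + (((ω a2 (a3 * y) b3 : kˣ) : k) * ((ω a2 (a3 * x) b3 : kˣ) : k) * ((ω a1 (a2 * a3) x : kˣ) : k) * ((ω a2 a3 x : kˣ) : k) * ((ω a1 (a2 * (a3 * x)) (b3 * b2) : kˣ) : k) * ((ω (a1 * a2) a3 y : kˣ) : k) * ((ω a1 a2 (a3 * y) : kˣ) : k) * ((ω (a1 * (a2 * (a3 * y))) (b3 * b2) b1 : kˣ) : k) * ((ω (a1 * (a2 * (a3 * (x * b3)))) b2 b1 : kˣ) : k) * ((ω (a1 * (a2 * (a3 * x))) b3 (b2 * b1) : kˣ) : k)) * d3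
    - (((ω a2 (a3 * x) b3 : kˣ) : k) * ((ω a1 (a2 * a3) x : kˣ) : k) * ((ω a2 a3 x : kˣ) : k) * ((ω a1 (a2 * (a3 * x)) (b3 * b2) : kˣ) : k) * ((ω (a1 * a2) a3 y : kˣ) : k) * ((ω (a1 * (a2 * (a3 * y))) (b3 * b2) b1 : kˣ) : k) * ((ω (a1 * (a2 * (a3 * (x * b3)))) b2 b1 : kˣ) : k) * ((ω (a1 * (a2 * (a3 * x))) b3 (b2 * b1) : kˣ) : k) * ((ω a1 (a2 * (a3 * (y * b3))) b2 : kˣ) : k) * ((ω (a2 * (a3 * y)) b3 b2 : kˣ) : k)) * d2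

lemma assoc_single (hcocycle : ∀ g₁ g₂ g₃ g₄ : G,
      ω (g₁ * g₂) g₃ g₄ * ω g₁ g₂ (g₃ * g₄)
        = ω g₁ g₂ g₃ * ω g₁ (g₂ * g₃) g₄ * ω g₂ g₃ g₄)
    (p q r : G × G × G × G) :
    agMul k G ω (agMul k G ω (Finsupp.single p 1) (Finsupp.single q 1)) (Finsupp.single r 1)
      = agMul k G ω (Finsupp.single p 1) (agMul k G ω (Finsupp.single q 1) (Finsupp.single r 1)) := by
  classical
  obtain ⟨a1, b1, y1, x1⟩ := p
  obtain ⟨a2, b2, y2, x2⟩ := q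
  obtain ⟨a3, b3, y3, x3⟩ := r
  rw [agMul_single, agMul_single, one_mul, one_smul, one_smul]
  by_cases hB : y2 = a3 * y3 * b3 ∧ x2 = a3 * x3 * b3
  · by_cases hA : y1 = a2 * y2 * b2 ∧ x1 = a2 * x2 * b2
    · obtain ⟨hBy, hBx⟩ := hB
      subst hBy; subst hBx
      obtain ⟨hAy, hAx⟩ := hA
      subst hAy; subst hAx
      have h1 : a2 * (a3 * y3 * b3) * b2 = a2 * a3 * y3 * (b3 * b2) := by group
      have h2 : a2 * (a3 * x3 * b3) * b2 = a2 * a3 * x3 * (b3 * b2) := by group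
      simp only [agMulFun, map_smul, LinearMap.smul_apply, agMul_single, one_mul, one_smul,
        smul_smul, h1, h2, and_self, if_true]
      have hpt : ((a1 * (a2 * a3) : G), b3 * b2 * b1, y3, x3)
          = ((a1 * a2 * a3 : G), b3 * (b2 * b1), y3, x3) := by
        simp [mul_assoc]
      rw [hpt]
      congr 1
      exact_mod_cast congrArg Units.val (key k G ω hcocycle a1 b1 a2 b2 a3 b3 y3 x3)
    · obtain ⟨hBy, hBx⟩ := hB
      subst hBy; subst hBx
      have hA' : ¬ (y1 = a2 * a3 * y3 * (b3 * b2) ∧ x1 = a2 * a3 * x3 * (b3 * b2)) := by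
        intro h
        exact hA ⟨by rw [h.1]; group, by rw [h.2]; group⟩
      simp only [agMulFun, map_smul, LinearMap.smul_apply, agMul_single, one_mul, one_smul,
        smul_smul, and_self, if_true, if_neg hA, if_neg hA', map_zero, LinearMap.zero_apply,
        smul_zero]
  · have hRHS : agMulFun k G ω (a2, b2, y2, x2) (a3, b3, y3, x3) = 0 := by
      simp only [agMulFun, if_neg hB]
    rw [hRHS, map_zero]
    simp only [agMulFun]
    split_ifs with h
    · rw [map_smul, LinearMap.smul_apply, agMul_single]
      simp only [agMulFun, if_neg hB, smul_zero, one_smul, smul_eq_mul, mul_one]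
    · rw [map_zero, LinearMap.zero_apply]

/-- For a finite group `G` and a normalized 3-cocycle `ω` valued in `kˣ`,
the multiplication of `A_G^ω` is associative with unit `Σ_{y,x} e_{1|1|y|x}`, so `A_G^ω`
is a `k`-algebra of dimension `|G|⁴`. -/
theorem ag_isAssociativeUnitalAlgebra
    (hcocycle : ∀ g₁ g₂ g₃ g₄ : G,
      ω (g₁ * g₂) g₃ g₄ * ω g₁ g₂ (g₃ * g₄)
        = ω g₁ g₂ g₃ * ω g₁ (g₂ * g₃) g₄ * ω g₂ g₃ g₄)
    (hnorm₁ : ∀ g h : G, ω g 1 h = 1)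
    (hnorm₂ : ∀ g h : G, ω 1 g h = 1)
    (hnorm₃ : ∀ g h : G, ω g h 1 = 1) :
    (∀ x y z : AG k G, agMul k G ω (agMul k G ω x y) z = agMul k G ω x (agMul k G ω y z)) ∧
    (∀ x : AG k G, agMul k G ω (agOne k G) x = x) ∧
    (∀ x : AG k G, agMul k G ω x (agOne k G) = x) ∧
    Module.finrank k (AG k G) = Fintype.card G ^ 4 := by
  classical
  have hsingle_smul : ∀ (p : G × G × G × G) (c : k),
      (Finsupp.single p c : AG k G) = c • Finsupp.single p 1 := by
    intro p c; simp [Finsupp.smul_single]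
  refine ⟨?_, ?_, ?_, ?_⟩
  · intro X Y Z
    induction X using Finsupp.induction_linear with
    | zero => simp
    | add f g hf hg => simp [map_add, LinearMap.add_apply, hf, hg]
    | single p c =>
      induction Y using Finsupp.induction_linear with
      | zero => simp
      | add f g hf hg => simp [map_add, LinearMap.add_apply, hf, hg]
      | single q d =>
        induction Z using Finsupp.induction_linear with
        | zero => simp
        | add f g hf hg => simp [map_add, LinearMap.add_apply, hf, hg]
        | single r e =>
          rw [hsingle_smul p c, hsingle_smul q d, hsingle_smul r e]
          simp only [map_smul, LinearMap.smul_apply]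
          rw [assoc_single k G ω hcocycle p q r]
  · intro X
    induction X using Finsupp.induction_linear with
    | zero => simp
    | add f g hf hg => simp [map_add, LinearMap.add_apply, hf, hg]
    | single q d =>
      obtain ⟨a, b, y, x⟩ := q
      rw [agOne]
      simp only [map_sum, LinearMap.sum_apply, agMul_single, one_mul, agMulFun, ite_and,
        hnorm₂, hnorm₃, mul_one, one_mul, inv_one, Units.val_one, one_smul, smul_ite,
        smul_zero, Finset.sum_ite_eq', Finset.mem_univ, if_true, Finsupp.smul_single,
        smul_eq_mul]
      simp [Finset.sum_ite_irrel, Finset.sum_ite_eq, Finset.sum_ite_eq']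
  · intro X
    induction X using Finsupp.induction_linear with
    | zero => simp
    | add f g hf hg => simp [map_add, LinearMap.add_apply, hf, hg]
    | single p d =>
      obtain ⟨a, b, y, x⟩ := p
      rw [agOne]
      simp only [agMul_single, one_mul, mul_one, agMulFun, ite_and,
        hnorm₁, hnorm₃, inv_one, Units.val_one, one_smul, smul_ite,
        smul_zero, map_sum, Finset.sum_ite_eq, Finset.mem_univ, if_true, Finsupp.smul_single,
        smul_eq_mul]
      simp [Finset.sum_ite_irrel, Finset.sum_ite_eq, Finset.sum_ite_eq']
  · simp [Module.finrank_finsupp_self, Fintype.card_prod, pow_succ, mul_assoc]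

end
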